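/- Let F be a {*}-formula over a field K all of whose input tensors have dimension at least 2, computing a tensor of order (n_1,…,n_k), and let n be the maximum of the maximal orders of the input tensors of F. Then for every index tuple e ∈ [n_1]×…×[n_k] there exists a skew arithmetic circuit of size at most 2·n³·|F| computing the entry F[e]. -/

import Mathlib

namespace TC

/-- An entry of an input tensor: an element of `K` or a variable. -/
inductive Entry (K : Type) where
  | const : K → Entry K
  | var : ℕ → Entry K

noncomputable def Entry.toPoly {K : Type} [CommSemiring K] : Entry K → MvPolynomial ℕ K
  | .const c => MvPolynomial.C c
  | .var n => MvPolynomial.X n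

/-- The index set of a tensor of order `ns`. -/
def Idx : List ℕ → Type
  | [] => PUnit
  | n :: ns => Fin n × Idx ns

def Idx.cast {xs ys : List ℕ} (h : xs = ys) (e : Idx xs) : Idx ys := h ▸ e

def Idx.app : (xs : List ℕ) → {ys : List ℕ} → Idx xs → Idx ys → Idx (xs ++ ys)
  | [], _, _, f => f
  | _ :: xs, _, e, f => (e.1, Idx.app xs e.2 f)

def Idx.split : (xs : List ℕ) → {ys : List ℕ} → Idx (xs ++ ys) → Idx xs × Idx ys
  | [], _, e => (PUnit.unit, e)
  | _ :: xs, _, e => ((e.1, (Idx.split xs e.2).1), (Idx.split xs e.2).2)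

/-- A tensor over `R`: an order `(n_1, …, n_k)` together with an entry map. -/
structure Tens (R : Type) where
  order : List ℕ
  entry : Idx order → R

/-- Number of entries of a tensor. -/
def Tens.tsize {R} (T : Tens R) : ℕ := T.order.prod

/-- Dimension of a tensor. -/
def Tens.dim {R} (T : Tens R) : ℕ := T.order.length

/-- Maximal order of a tensor. -/
def Tens.maxOrder {R} (T : Tens R) : ℕ := T.order.foldr max 0

/-- `T` and `G` can be contracted: last order of `T` equals first order of `G`. -/
def Tens.Compatible {R} (T G : Tens R) : Prop :=
  T.order ≠ [] ∧ G.order ≠ [] ∧ T.order.getLast? = G.order.head?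

/-- Contraction `T * G` on the last dimension of `T` and the first dimension of `G`
(returning a junk scalar tensor when the orders are incompatible). -/
def Tens.contr {R : Type} [CommSemiring R] (T G : Tens R) : Tens R :=
  match hT : T.order.getLast?, hG : G.order with
  | some c, c' :: ms =>
      if hc : c' = c then
        { order := T.order.dropLast ++ ms
          entry := fun e =>
            let p := Idx.split T.order.dropLast e
            ∑ i : Fin c,
              T.entry (Idx.cast
                (show T.order.dropLast ++ [c] = T.order by
                  have hne : T.order ≠ [] := by
                    intro h; rw [h] at hT; simp at hT
                  have : T.order.getLast hne = c := by
                    have := List.getLast?_eq_getLast hne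
                    rw [this] at hT
                    exact (Option.some.injEq _ _).mp hT
                  rw [← this]
                  exact List.dropLast_append_getLast hne)
                (Idx.app T.order.dropLast p.1 ((i, PUnit.unit) : Idx [c]))) *
              G.entry (Idx.cast
                (show c :: ms = G.order by rw [hG, hc])
                ((i, p.2) : Idx (c :: ms))) }
      else ⟨[], fun _ => 0⟩
  | _, _ => ⟨[], fun _ => 0⟩

end TC

namespace TC

/-- Insert a coordinate value at position `i`, recovering an index for order `l`
from an index for `l.eraseIdx i`. -/
def Idx.insertAt : (l : List ℕ) → (i : Fin l.length) → Fin (l.get i) →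
    Idx (l.eraseIdx i.val) → Idx l
  | _ :: _, ⟨0, _⟩, r, e => (r, e)
  | _ :: l, ⟨i + 1, h⟩, r, e =>
      (e.1, Idx.insertAt l ⟨i, by simpa using Nat.lt_of_succ_lt_succ h⟩ r e.2)

/-- The contraction `T *_{i,j} G` on dimension `i` of `T` and dimension `j` of `G`
(0-based; returns a junk scalar tensor when incompatible). -/
noncomputable def Tens.contrIJ {R : Type} [CommSemiring R] (T G : Tens R) (i j : ℕ) : Tens R :=
  if h : ∃ (hi : i < T.order.length) (hj : j < G.order.length),
      T.order.get ⟨i, hi⟩ = G.order.get ⟨j, hj⟩ then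
    { order := T.order.eraseIdx i ++ G.order.eraseIdx j
      entry := fun e =>
        let hi := h.choose
        let hj := h.choose_spec.choose
        let hc := h.choose_spec.choose_spec
        let p := Idx.split (T.order.eraseIdx i) e
        ∑ r : Fin (T.order.get ⟨i, hi⟩),
          T.entry (Idx.insertAt T.order ⟨i, hi⟩ r p.1) *
          G.entry (Idx.insertAt G.order ⟨j, hj⟩ (Fin.cast hc r) p.2) }
  else ⟨[], fun _ => 0⟩

/-- `{*}`-formulas: leaves are input tensors with entries in `K` or variables,
internal nodes are contractions `*`. -/
inductive SForm (K : Type) where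
  | input : Tens (Entry K) → SForm K
  | contr : SForm K → SForm K → SForm K

variable {K : Type} [Field K]

/-- The tensor computed by a `{*}`-formula. -/
noncomputable def SForm.eval : SForm K → Tens (MvPolynomial ℕ K)
  | .input T => ⟨T.order, fun e => (T.entry e).toPoly⟩
  | .contr F G => (F.eval).contr G.eval

/-- Well-formedness: at every `*`-node the orders match. -/
def SForm.WF : SForm K → Prop
  | .input _ => True
  | .contr F G => F.WF ∧ G.WF ∧ F.eval.Compatible G.eval

/-- Size of a `{*}`-formula: number of `*`-nodes plus sizes of the input tensors. -/
def SForm.size : SForm K → ℕ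
  | .input T => T.tsize
  | .contr F G => F.size + G.size + 1

/-- Dimension of the tensor computed by the formula. -/
noncomputable def SForm.dim (F : SForm K) : ℕ := F.eval.dim

/-- Maximal dimension over all nodes of the formula. -/
noncomputable def SForm.maxdim : SForm K → ℕ
  | .input T => T.dim
  | .contr F G => max ((F.eval.contr G.eval).dim) (max F.maxdim G.maxdim)

/-- Input dimension: maximal dimension of an input tensor. -/
def SForm.inputDim : SForm K → ℕ
  | .input T => T.dim
  | .contr F G => max F.inputDim G.inputDim

/-- Maximum of the maximal orders of the input tensors. -/
def SForm.inputMaxOrder : SForm K → ℕ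
  | .input T => T.maxOrder
  | .contr F G => max F.inputMaxOrder G.inputMaxOrder

/-- All input tensors have dimension at least 2. -/
def SForm.InputsDimGE2 : SForm K → Prop
  | .input T => 2 ≤ T.dim
  | .contr F G => F.InputsDimGE2 ∧ G.InputsDimGE2

/-- A formula of dimension `k` and input dimension `p` is tame if
`maxdim ≤ max k p`. -/
noncomputable def SForm.Tame (F : SForm K) : Prop := F.maxdim ≤ max F.dim F.inputDim

/-- Every subformula is tame. -/
noncomputable def SForm.TotallyTame : SForm K → Prop
  | .input T => (SForm.input T : SForm K).Tame
  | .contr F G => (SForm.contr F G).Tame ∧ F.TotallyTame ∧ G.TotallyTame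

/-- The tensor computed by `F` has a single entry, equal to the polynomial `f`. -/
noncomputable def SForm.ComputesPoly (F : SForm K) (f : MvPolynomial ℕ K) : Prop :=
  F.eval.tsize = 1 ∧ ∀ e, F.eval.entry e = f

/-- `{*_{i,j}}`-formulas: internal nodes carry the pair of contracted dimensions
(0-based). -/
inductive IForm (K : Type) where
  | input : Tens (Entry K) → IForm K
  | contr : ℕ → ℕ → IForm K → IForm K → IForm K

noncomputable def IForm.eval : IForm K → Tens (MvPolynomial ℕ K)
  | .input T => ⟨T.order, fun e => (T.entry e).toPoly⟩
  | .contr i j F G => (F.eval).contrIJ G.eval i j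

def IForm.WF : IForm K → Prop
  | .input _ => True
  | .contr i j F G => F.WF ∧ G.WF ∧
      ∃ (hi : i < F.eval.order.length) (hj : j < G.eval.order.length),
        F.eval.order.get ⟨i, hi⟩ = G.eval.order.get ⟨j, hj⟩

def IForm.size : IForm K → ℕ
  | .input T => T.tsize
  | .contr _ _ F G => F.size + G.size + 1

noncomputable def IForm.dim (F : IForm K) : ℕ := F.eval.dim

noncomputable def IForm.maxdim : IForm K → ℕ
  | .input T => T.dim
  | .contr i j F G => max ((F.eval.contrIJ G.eval i j).dim) (max F.maxdim G.maxdim)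

def IForm.inputDim : IForm K → ℕ
  | .input T => T.dim
  | .contr _ _ F G => max F.inputDim G.inputDim

noncomputable def IForm.Tame (F : IForm K) : Prop := F.maxdim ≤ max F.dim F.inputDim

noncomputable def IForm.TotallyTame : IForm K → Prop
  | .input T => (IForm.input T : IForm K).Tame
  | .contr i j F G => (IForm.contr i j F G).Tame ∧ F.TotallyTame ∧ G.TotallyTame

noncomputable def IForm.ComputesPoly (F : IForm K) (f : MvPolynomial ℕ K) : Prop :=
  F.eval.tsize = 1 ∧ ∀ e, F.eval.entry e = f

end TC

namespace TC

/-- A gate of an arithmetic circuit: an input (constant or variable) or a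
computation gate with the indices of its two children. -/
inductive Gate (K : Type) where
  | const : K → Gate K
  | var : ℕ → Gate K
  | add : ℕ → ℕ → Gate K
  | mul : ℕ → ℕ → Gate K

def Gate.children {K} : Gate K → List ℕ
  | .add j k => [j, k]
  | .mul j k => [j, k]
  | _ => []

def Gate.IsInput {K} : Gate K → Prop
  | .const _ => True
  | .var _ => True
  | _ => False

/-- An arithmetic circuit: a DAG of gates (children point to smaller indices,
which is equivalent to acyclicity) with a distinguished output gate. -/
structure Circuit (K : Type) where
  size : ℕ
  gate : Fin size → Gate K
  output : Fin size
  wf : ∀ i : Fin size, ∀ j ∈ (gate i).children, j < i.val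

/-- The polynomial computed by a gate of the circuit. -/
noncomputable def Circuit.eval {K : Type} [Field K] (C : Circuit K) :
    Fin C.size → MvPolynomial ℕ K
  | i =>
    match h : C.gate i with
    | .const c => MvPolynomial.C c
    | .var n => MvPolynomial.X n
    | .add j k =>
        have hj : j < i.val := C.wf i j (by rw [h]; simp [Gate.children])
        have hk : k < i.val := C.wf i k (by rw [h]; simp [Gate.children])
        C.eval ⟨j, hj.trans i.isLt⟩ + C.eval ⟨k, hk.trans i.isLt⟩
    | .mul j k =>
        have hj : j < i.val := C.wf i j (by rw [h]; simp [Gate.children])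
        have hk : k < i.val := C.wf i k (by rw [h]; simp [Gate.children])
        C.eval ⟨j, hj.trans i.isLt⟩ * C.eval ⟨k, hk.trans i.isLt⟩
  termination_by i => i.val

/-- The circuit computes `f` if its output gate computes `f`. -/
noncomputable def Circuit.Computes {K : Type} [Field K] (C : Circuit K)
    (f : MvPolynomial ℕ K) : Prop :=
  C.eval C.output = f

/-- `a` is a child of `b`. -/
def Circuit.Child {K} (C : Circuit K) (a b : Fin C.size) : Prop :=
  a.val ∈ (C.gate b).children

/-- The set of gates of the subcircuit rooted at `i`. -/
def Circuit.Subgates {K} (C : Circuit K) (i : Fin C.size) : Set (Fin C.size) :=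
  {j | Relation.ReflTransGen C.Child j i}

/-- Multiplicatively disjoint: the subcircuits rooted at the two children of any
`×`-gate are disjoint. -/
def Circuit.MultDisjoint {K} (C : Circuit K) : Prop :=
  ∀ i : Fin C.size, ∀ j k : ℕ, C.gate i = .mul j k →
    ∀ (hj : j < C.size) (hk : k < C.size),
      Disjoint (C.Subgates ⟨j, hj⟩) (C.Subgates ⟨k, hk⟩)

/-- Skew: every `×`-gate has at least one child which is an input gate. -/
def Circuit.Skew {K} (C : Circuit K) : Prop :=
  ∀ i : Fin C.size, ∀ j k : ℕ, C.gate i = .mul j k →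
    ∀ (hj : j < C.size) (hk : k < C.size),
      (C.gate ⟨j, hj⟩).IsInput ∨ (C.gate ⟨k, hk⟩).IsInput

/-- The class VP: families of polynomials computed by polynomial-size
multiplicatively disjoint circuits. -/
noncomputable def VP {K : Type} [Field K] (f : ℕ → MvPolynomial ℕ K) : Prop :=
  ∃ (C : ℕ → Circuit K) (P : Polynomial ℕ),
    ∀ n, (C n).MultDisjoint ∧ (C n).Computes (f n) ∧ (C n).size ≤ P.eval n

/-- Parse trees, recording at each node the index of the corresponding gate. -/
inductive ParseT where
  | leaf : ℕ → ParseT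
  | plus : ℕ → ParseT → ParseT
  | times : ℕ → ParseT → ParseT → ParseT

/-- Ordered rooted trees (shapes of parse trees); two parse trees are isomorphic
as ordered rooted trees iff they have the same shape. -/
inductive Shape where
  | lf : Shape
  | un : Shape → Shape
  | bin : Shape → Shape → Shape

def ParseT.shape : ParseT → Shape
  | .leaf _ => .lf
  | .plus _ t => .un t.shape
  | .times _ l r => .bin l.shape r.shape

/-- Number of vertices of a tree. -/
def Shape.size : Shape → ℕ
  | .lf => 1
  | .un t => t.size + 1
  | .bin l r => l.size + r.size + 1

/-- `C.ParseFrom i t`: `t` is a parse tree of the subcircuit of `C` rooted at gate `i`. -/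
inductive Circuit.ParseFrom {K} (C : Circuit K) : Fin C.size → ParseT → Prop where
  | leaf (i : Fin C.size) (h : (C.gate i).IsInput) : C.ParseFrom i (.leaf i.val)
  | plusL (i : Fin C.size) (j k : ℕ) (h : C.gate i = .add j k) (hj : j < C.size)
      (t : ParseT) (ht : C.ParseFrom ⟨j, hj⟩ t) : C.ParseFrom i (.plus i.val t)
  | plusR (i : Fin C.size) (j k : ℕ) (h : C.gate i = .add j k) (hk : k < C.size)
      (t : ParseT) (ht : C.ParseFrom ⟨k, hk⟩ t) : C.ParseFrom i (.plus i.val t)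
  | times (i : Fin C.size) (j k : ℕ) (h : C.gate i = .mul j k)
      (hj : j < C.size) (hk : k < C.size) (tl tr : ParseT)
      (hl : C.ParseFrom ⟨j, hj⟩ tl) (hr : C.ParseFrom ⟨k, hk⟩ tr) :
      C.ParseFrom i (.times i.val tl tr)

/-- `t` is a parse tree of the circuit `C`. -/
def Circuit.IsParseTree {K} (C : Circuit K) (t : ParseT) : Prop :=
  C.ParseFrom C.output t

end TC


namespace TC
variable {K : Type}

theorem Idx.cast_self {xs : List ℕ} (h : xs = xs) (e : Idx xs) : Idx.cast h e = e := rfl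

theorem Idx.cast_cast {xs ys zs : List ℕ} (h1 : xs = ys) (h2 : ys = zs) (e : Idx xs) :
    Idx.cast h2 (Idx.cast h1 e) = Idx.cast (h1.trans h2) e := by subst h1; subst h2; rfl

theorem Idx.cast_eq_cast_of {xs ys zs : List ℕ} (h1 : xs = zs) (h2 : ys = zs)
    (e1 : Idx xs) (e2 : Idx ys) (hh : HEq e1 e2) : Idx.cast h1 e1 = Idx.cast h2 e2 := by
  subst h1; subst h2; cases hh; rfl

theorem Idx.split_app : ∀ (xs : List ℕ) {ys : List ℕ} (e : Idx xs) (f : Idx ys),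
    Idx.split xs (Idx.app xs e f) = (e, f)
  | [], _, _, f => rfl
  | x :: xs, ys, e, f => by
      show ((e.1, (Idx.split xs (Idx.app xs e.2 f)).1), (Idx.split xs (Idx.app xs e.2 f)).2) = _
      rw [Idx.split_app xs e.2 f]; rfl

theorem Idx.app_split : ∀ (xs : List ℕ) {ys : List ℕ} (e : Idx (xs ++ ys)),
    Idx.app xs (Idx.split xs e).1 (Idx.split xs e).2 = e
  | [], _, _ => rfl
  | x :: xs, ys, e => by
      show (e.1, Idx.app xs (Idx.split xs e.2).1 (Idx.split xs e.2).2) = e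
      rw [Idx.app_split xs e.2]; rfl

theorem Idx.heq_pair {P Q : List ℕ} (hPQ : P = Q) {n : ℕ} (a : Fin n)
    {X : Idx P} {Y : Idx Q} (h : HEq X Y) :
    HEq ((a, X) : Idx (n :: P)) ((a, Y) : Idx (n :: Q)) := by
  subst hPQ; cases h; rfl

theorem Idx.app_app_heq : ∀ (xs : List ℕ) {ys zs : List ℕ} (e : Idx xs) (f : Idx ys) (g : Idx zs),
    HEq (Idx.app (xs ++ ys) (Idx.app xs e f) g) (Idx.app xs e (Idx.app ys f g))
  | [], _, _, _, _, _ => HEq.rfl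
  | x :: xs, ys, zs, e, f, g => by
      show HEq ((e.1, Idx.app (xs ++ ys) (Idx.app xs e.2 f) g))
        ((e.1, Idx.app xs e.2 (Idx.app ys f g)))
      exact Idx.heq_pair (List.append_assoc xs ys zs) e.1 (Idx.app_app_heq xs e.2 f g)

theorem idx_prod_pos : ∀ (l : List ℕ), Idx l → 0 < l.prod
  | [], _ => Nat.one_pos
  | n :: l, e => by
      rw [List.prod_cons]
      exact Nat.mul_pos e.1.pos (idx_prod_pos l e.2)

theorem idx_mem_pos : ∀ (l : List ℕ), Idx l → ∀ k ∈ l, 1 ≤ k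
  | n :: l, e, k, hk => by
      rcases List.mem_cons.1 hk with rfl | hk
      · exact e.1.pos
      · exact idx_mem_pos l e.2 k hk

theorem le_foldr_max : ∀ (l : List ℕ) (a : ℕ), a ∈ l → a ≤ l.foldr max 0
  | n :: l, a, h => by
      rcases List.mem_cons.1 h with rfl | h
      · exact le_max_left _ _
      · exact le_trans (le_foldr_max l a h) (le_max_right _ _)

end TC
namespace TC

theorem lastq (x y : ℕ) (l : List ℕ) : (x :: (l ++ [y])).getLast? = some y := by
  rw [← List.cons_append]
  exact List.getLast?_concat

theorem gen_entry {R : Type} [CommSemiring R] (as as' bs : List ℕ) (hA : as' = as) (c : ℕ)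
    (Te : Idx (as ++ [c]) → R) (Ge : Idx (c :: bs) → R)
    (P0 : as ++ bs = as' ++ bs) (P1 : as' ++ [c] = as ++ [c]) (P2 : c :: bs = c :: bs)
    (hTs : as ++ [c] = as ++ [c]) (hGs : c :: bs = c :: bs)
    (e1 : Idx as) (e2 : Idx bs) :
    (∑ i : Fin c,
      Te (Idx.cast P1 (Idx.app as' (Idx.split as' (Idx.cast P0 (Idx.app as e1 e2))).1 (i, PUnit.unit))) *
      Ge (Idx.cast P2 ((i, (Idx.split as' (Idx.cast P0 (Idx.app as e1 e2))).2) : Idx (c :: bs)))) =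
    ∑ i : Fin c, Te (Idx.cast hTs (Idx.app as e1 ((i, PUnit.unit) : Idx [c]))) *
      Ge (Idx.cast hGs ((i, e2) : Idx (c :: bs))) := by
  subst hA
  simp only [Idx.cast_self, Idx.split_app]

theorem Tens.entry_eq_of_eq {R : Type} {D D' : Tens R} (h : D = D') (x : Idx D.order) :
    D.entry x = D'.entry (Idx.cast (congrArg Tens.order h) x) := by
  subst h; rfl

theorem contr_spec' {R : Type} [CommSemiring R] (T G : Tens R) (as bs : List ℕ) (c : ℕ)
    (hT : T.order = as ++ [c]) (hG : G.order = c :: bs) :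
    ∃ hO : (T.contr G).order = as ++ bs,
      ∀ (e1 : Idx as) (e2 : Idx bs),
        (T.contr G).entry (Idx.cast hO.symm (Idx.app as e1 e2)) =
          ∑ i : Fin c, T.entry (Idx.cast hT.symm (Idx.app as e1 ((i, PUnit.unit) : Idx [c]))) *
            G.entry (Idx.cast hG.symm ((i, e2) : Idx (c :: bs))) := by
  obtain ⟨To, Te⟩ := T
  obtain ⟨Go, Ge⟩ := G
  dsimp at hT hG
  subst hT; subst hG
  unfold Tens.contr
  split
  case _ c0 c' ms heq1 heq2 =>
    dsimp at heq1 heq2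
    injection heq2 with h1 h2
    subst h1; subst h2
    rw [List.getLast?_concat] at heq1
    injection heq1 with h0
    subst h0
    dsimp only
    refine ⟨by simp, ?_⟩
    intro e1 e2
    rw [Tens.entry_eq_of_eq (dif_pos rfl), Idx.cast_cast]
    exact gen_entry as _ _ List.dropLast_concat _ Te Ge _ _ _ _ _ e1 e2
  case _ hfail =>
    exact ((by assumption : ∀ (c1 c' : ℕ) (ms : List ℕ), (as ++ [c]).getLast? = some c1 → c :: bs = c' :: ms → False) c c bs (List.getLast?_concat (l := as)) rfl).elim

end TC
namespace TC
variable {K : Type} [Field K]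

noncomputable def evL (l : List (Gate K)) : ℕ → MvPolynomial ℕ K
  | i => match l[i]? with
    | none => 0
    | some (.const c) => MvPolynomial.C c
    | some (.var v) => MvPolynomial.X v
    | some (.add j k) => if h : j < i ∧ k < i then evL l j + evL l k else 0
    | some (.mul j k) => if h : j < i ∧ k < i then evL l j * evL l k else 0
  termination_by i => i
  decreasing_by exact h.1; exact h.2; exact h.1; exact h.2

/-- well-formed & skew gate list -/
def GOK (l : List (Gate K)) : Prop :=
  ∀ (i : ℕ) (g : Gate K), l[i]? = some g → (∀ j ∈ g.children, j < i) ∧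
    ∀ (j k : ℕ), g = .mul j k → ∃ gj gk, l[j]? = some gj ∧ l[k]? = some gk ∧
      (gj.IsInput ∨ gk.IsInput)

def entryGate : Entry K → Gate K
  | .const c => .const c
  | .var v => .var v

omit [Field K] in
theorem entryGate_isInput (t : Entry K) : (entryGate t).IsInput := by
  cases t <;> trivial

theorem evL_entryGate (l : List (Gate K)) (i : ℕ) (t : Entry K)
    (h : l[i]? = some (entryGate t)) : evL l i = t.toPoly := by
  rw [evL]
  cases t <;> rw [h] <;> rfl

theorem evL_append (l m : List (Gate K)) : ∀ i, i < l.length → evL (l ++ m) i = evL l i := by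
  intro i
  induction i using Nat.strong_induction_on with
  | _ i ih =>
    intro hi
    rw [evL, evL, List.getElem?_append_left hi]
    rcases h : l[i]? with _ | g
    · rfl
    · cases g with
      | const c => rfl
      | var v => rfl
      | add j k =>
          dsimp only
          by_cases hj : j < i
          · by_cases hk : k < i
            · rw [dif_pos ⟨hj, hk⟩, dif_pos ⟨hj, hk⟩,
                ih j hj (hj.trans hi), ih k hk (hk.trans hi)]
            · rw [dif_neg (by tauto), dif_neg (by tauto)]
          · rw [dif_neg (by tauto), dif_neg (by tauto)]
      | mul j k =>
          dsimp only
          by_cases hj : j < i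
          · by_cases hk : k < i
            · rw [dif_pos ⟨hj, hk⟩, dif_pos ⟨hj, hk⟩,
                ih j hj (hj.trans hi), ih k hk (hk.trans hi)]
            · rw [dif_neg (by tauto), dif_neg (by tauto)]
          · rw [dif_neg (by tauto), dif_neg (by tauto)]

omit [Field K] in
theorem getElem?_append_pres {l m : List (Gate K)} {j : ℕ} {gj : Gate K}
    (h : l[j]? = some gj) : (l ++ m)[j]? = some gj := by
  rw [List.getElem?_append_left (by
    by_contra hc
    rw [List.getElem?_eq_none (by omega)] at h
    exact nomatch h), h]

omit [Field K] in
theorem GOK_push {l : List (Gate K)} (hOK : GOK l) (g : Gate K)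
    (hch : ∀ j ∈ g.children, j < l.length)
    (hsk : ∀ (j k : ℕ), g = .mul j k → (∃ gj, l[j]? = some gj ∧ gj.IsInput) ∨
      (∃ gk, l[k]? = some gk ∧ gk.IsInput)) : GOK (l ++ [g]) := by
  intro i g' hg'
  rcases Nat.lt_or_ge i l.length with hi | hi
  · rw [List.getElem?_append_left hi] at hg'
    obtain ⟨h1, h2⟩ := hOK i g' hg'
    refine ⟨h1, fun j k hjk => ?_⟩
    obtain ⟨gj, gk, hj, hk, hor⟩ := h2 j k hjk
    exact ⟨gj, gk, getElem?_append_pres hj, getElem?_append_pres hk, hor⟩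
  · have hi2 : i < l.length + 1 := by
      by_contra hc
      rw [List.getElem?_eq_none (by simp; omega)] at hg'
      exact nomatch hg'
    have : i = l.length := by omega
    subst this
    rw [List.getElem?_append_right (le_refl _)] at hg'
    simp at hg'
    subst hg'
    refine ⟨fun j hj => lt_of_lt_of_le (hch j hj) hi, fun j k hjk => ?_⟩
    rcases hsk j k hjk with ⟨gj, hj, hji⟩ | ⟨gk, hk, hki⟩
    · have hkch : k < l.length := hch k (by rw [hjk]; simp [Gate.children])
      exact ⟨gj, l[k], getElem?_append_pres hj,
        getElem?_append_pres (List.getElem?_eq_getElem hkch), Or.inl hji⟩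
    · have hjch : j < l.length := hch j (by rw [hjk]; simp [Gate.children])
      exact ⟨l[j], gk, getElem?_append_pres (List.getElem?_eq_getElem hjch),
        getElem?_append_pres hk, Or.inr hki⟩

end TC
namespace TC
variable {K : Type} [Field K]

noncomputable def toCirc (l : List (Gate K)) (h : GOK l) (out : ℕ) (hout : out < l.length) :
    Circuit K where
  size := l.length
  gate := fun i => l[i]
  output := ⟨out, hout⟩
  wf := fun i j hj => (h i.val l[i.val] (List.getElem?_eq_getElem i.isLt)).1 j hj

omit [Field K] in
theorem toCirc_skew (l : List (Gate K)) (h : GOK l) (out : ℕ) (hout : out < l.length) :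
    (toCirc l h out hout).Skew := by
  intro i j k hmul hj hk
  obtain ⟨gj, gk, hgj, hgk, hor⟩ :=
    (h i.val l[i.val] (List.getElem?_eq_getElem i.isLt)).2 j k hmul
  have e1 : (toCirc l h out hout).gate ⟨j, hj⟩ = gj := by
    show l[j] = gj
    rw [List.getElem?_eq_getElem (l := l) (by exact hj)] at hgj
    exact Option.some.inj hgj
  have e2 : (toCirc l h out hout).gate ⟨k, hk⟩ = gk := by
    show l[k] = gk
    rw [List.getElem?_eq_getElem (l := l) (by exact hk)] at hgk
    exact Option.some.inj hgk
  rw [e1, e2]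
  exact hor

theorem toCirc_eval (l : List (Gate K)) (h : GOK l) (out : ℕ) (hout : out < l.length) :
    ∀ (n : ℕ) (hn : n < l.length),
      (toCirc l h out hout).eval ⟨n, hn⟩ = evL l n := by
  intro n
  induction n using Nat.strong_induction_on with
  | _ n ih =>
    intro hn
    rw [Circuit.eval, evL]
    have hg : (toCirc l h out hout).gate ⟨n, hn⟩ = l[n] := rfl
    rw [List.getElem?_eq_getElem hn]
    split
    · rename_i c heq
      rw [show l[n] = Gate.const c from heq]
    · rename_i v heq
      rw [show l[n] = Gate.var v from heq]
    · rename_i j k heq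
      have hl : l[n] = Gate.add j k := heq
      have hch := (h n _ (List.getElem?_eq_getElem hn)).1
      rw [hl] at hch
      have hj : j < n := hch j (by simp [Gate.children])
      have hk : k < n := hch k (by simp [Gate.children])
      rw [hl]
      dsimp only
      rw [dif_pos ⟨hj, hk⟩, ← ih j hj (hj.trans hn), ← ih k hk (hk.trans hn)]
    · rename_i j k heq
      have hl : l[n] = Gate.mul j k := heq
      have hch := (h n _ (List.getElem?_eq_getElem hn)).1
      rw [hl] at hch
      have hj : j < n := hch j (by simp [Gate.children])
      have hk : k < n := hch k (by simp [Gate.children])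
      rw [hl]
      dsimp only
      rw [dif_pos ⟨hj, hk⟩, ← ih j hj (hj.trans hn), ← ih k hk (hk.trans hn)]

end TC
namespace TC
variable {K : Type} [Field K]

theorem evL_zero (l : List (Gate K)) (hz : l[0]? = some (.const 0)) : evL l 0 = 0 := by
  rw [evL, hz]
  exact map_zero _

theorem len_pos_of_z (l : List (Gate K)) (hz : l[0]? = some (.const 0)) : 0 < l.length := by
  by_contra hc
  rw [List.getElem?_eq_none (by omega)] at hz
  exact nomatch hz

theorem evL_mul (l : List (Gate K)) (i j k : ℕ) (h : l[i]? = some (.mul j k))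
    (hj : j < i) (hk : k < i) : evL l i = evL l j * evL l k := by
  rw [evL, h]
  exact dif_pos ⟨hj, hk⟩

theorem evL_add (l : List (Gate K)) (i j k : ℕ) (h : l[i]? = some (.add j k))
    (hj : j < i) (hk : k < i) : evL l i = evL l j + evL l k := by
  rw [evL, h]
  exact dif_pos ⟨hj, hk⟩

omit [Field K] in
theorem entryGate_children (t : Entry K) : (entryGate t).children = [] := by
  cases t <;> rfl

omit [Field K] in
theorem entryGate_ne_mul (t : Entry K) (j k : ℕ) : entryGate t ≠ .mul j k := by
  cases t <;> exact fun h => by simp [entryGate] at h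

theorem dotProd (l : List (Gate K)) (hOK : GOK l) (hz : l[0]? = some (.const 0)) :
    ∀ (g0 : ℕ) (x : Fin g0 → ℕ), (∀ a, x a < l.length) → ∀ (p : Fin g0 → Entry K),
    ∃ m out, GOK (l ++ m) ∧ m.length ≤ 3 * g0 - 1 ∧ out < (l ++ m).length ∧
      evL (l ++ m) out = ∑ a : Fin g0, evL l (x a) * (p a).toPoly := by
  intro g0
  induction g0 with
  | zero =>
      intro x hx p
      refine ⟨[], 0, by simpa using hOK, by simp, ?_, ?_⟩
      · simpa using len_pos_of_z l hz
      · rw [List.append_nil, evL_zero l hz]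
        simp
  | succ g0 ih =>
      intro x hx p
      obtain ⟨m', out', hOK', hlen', hout', hev'⟩ :=
        ih (fun a => x a.castSucc) (fun a => hx _) (fun a => p a.castSucc)
      set l1 := l ++ m' with hl1
      set g1 : Gate K := entryGate (p (Fin.last g0)) with hg1
      set g2 : Gate K := Gate.mul (x (Fin.last g0)) l1.length with hg2
      have hxl : x (Fin.last g0) < l1.length := by
        simp only [hl1, List.length_append]
        exact lt_of_lt_of_le (hx _) (Nat.le_add_right _ _)
      have hOK2 : GOK (l1 ++ [g1]) := by
        refine GOK_push hOK' g1 ?_ ?_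
        · intro j hj
          rw [hg1, entryGate_children] at hj
          exact absurd hj List.not_mem_nil
        · intro j k hjk
          exact absurd hjk (entryGate_ne_mul _ _ _)
      have hlook1 : (l1 ++ [g1])[l1.length]? = some g1 := List.getElem?_concat_length
      have hOK3 : GOK ((l1 ++ [g1]) ++ [g2]) := by
        refine GOK_push hOK2 g2 ?_ ?_
        · intro j hj
          simp only [hg2, Gate.children, List.mem_cons, List.not_mem_nil, or_false] at hj
          rcases hj with rfl | rfl
          · simp only [List.length_append, List.length_cons, List.length_nil]
            omega
          · simp
        · intro j k hjk
          injection hjk with hj hk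
          subst hk
          exact Or.inr ⟨g1, hlook1, entryGate_isInput _⟩
      set l3 := (l1 ++ [g1]) ++ [g2] with hl3
      have hlen3 : l3.length = l1.length + 2 := by simp [hl3]
      have hev_g1 : evL l3 l1.length = (p (Fin.last g0)).toPoly := by
        refine evL_entryGate _ _ _ ?_
        rw [hl3, List.getElem?_append_left (by simp), hlook1]
      have hlook2 : l3[l1.length + 1]? = some g2 := by
        have h0 := List.getElem?_concat_length (l := l1 ++ [g1]) (a := g2)
        rwa [show (l1 ++ [g1]).length = l1.length + 1 by simp] at h0
      have hev_xl : evL l3 (x (Fin.last g0)) = evL l (x (Fin.last g0)) := by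
        rw [hl3, evL_append _ _ _ (by simp; omega), evL_append _ _ _ hxl, hl1,
          evL_append _ _ _ (hx _)]
      have hev_g2 : evL l3 (l1.length + 1) =
          evL l (x (Fin.last g0)) * (p (Fin.last g0)).toPoly := by
        rw [evL_mul l3 _ _ _ hlook2 (by omega) (by omega), hev_g1, hev_xl]
      by_cases hg00 : g0 = 0
      · subst hg00
        have hm' : m' = [] := List.eq_nil_of_length_eq_zero (by omega)
        refine ⟨m' ++ [g1] ++ [g2], l1.length + 1, ?_, ?_, ?_, ?_⟩
        · rw [show l ++ (m' ++ [g1] ++ [g2]) = l3 by simp [hl3, hl1]]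
          exact hOK3
        · simp [hm']
        · rw [show l ++ (m' ++ [g1] ++ [g2]) = l3 by simp [hl3, hl1]]
          omega
        · rw [show l ++ (m' ++ [g1] ++ [g2]) = l3 by simp [hl3, hl1], hev_g2]
          rw [show (Fin.last 0) = (0 : Fin 1) from rfl]
          simp
      · set g3 : Gate K := Gate.add out' (l1.length + 1) with hg3
        have hOK4 : GOK (l3 ++ [g3]) := by
          refine GOK_push hOK3 g3 ?_ ?_
          · intro j hj
            simp only [hg3, Gate.children, List.mem_cons, List.not_mem_nil, or_false] at hj
            rcases hj with rfl | rfl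
            · rw [hlen3]; omega
            · rw [hlen3]; omega
          · intro j k hjk
            exact absurd hjk (by simp [hg3])
        have hlook3 : (l3 ++ [g3])[l1.length + 2]? = some g3 := by
          have := List.getElem?_concat_length (l := l3) (a := g3)
          rwa [hlen3] at this
        have hev_out' : evL (l3 ++ [g3]) out' = evL l1 out' := by
          rw [evL_append _ _ _ (by simp [hl3]; omega), hl3,
            evL_append _ _ _ (by simp; omega), evL_append _ _ _ hout']
        have hev_final : evL (l3 ++ [g3]) (l1.length + 2) =
            (∑ a : Fin g0, evL l (x a.castSucc) * (p a.castSucc).toPoly) +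
              evL l (x (Fin.last g0)) * (p (Fin.last g0)).toPoly := by
          rw [evL_add _ _ _ _ hlook3 (by omega) (by omega), hev_out', hev',
            evL_append _ _ _ (by rw [hlen3]; omega), hev_g2]
        refine ⟨m' ++ [g1] ++ [g2] ++ [g3], l1.length + 2, ?_, ?_, ?_, ?_⟩
        · rw [show l ++ (m' ++ [g1] ++ [g2] ++ [g3]) = l3 ++ [g3] by simp [hl3, hl1]]
          exact hOK4
        · simp only [List.length_append, List.length_cons, List.length_nil]
          omega
        · rw [show l ++ (m' ++ [g1] ++ [g2] ++ [g3]) = l3 ++ [g3] by simp [hl3, hl1]]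
          simp only [List.length_append, List.length_cons, List.length_nil, hlen3]
          omega
        · rw [show l ++ (m' ++ [g1] ++ [g2] ++ [g3]) = l3 ++ [g3] by simp [hl3, hl1],
            hev_final, Fin.sum_univ_castSucc]
end TC
namespace TC
variable {K : Type} [Field K]

theorem dotProdMany (l : List (Gate K)) (hOK : GOK l) (hz : l[0]? = some (.const 0))
    (k : ℕ) :
    ∀ (g0 : ℕ) (x : Fin g0 → ℕ), (∀ a, x a < l.length) →
      ∀ (p : Fin g0 → Fin k → Entry K),
    ∃ m, GOK (l ++ m) ∧ m.length ≤ k * (3 * g0 - 1) ∧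
      ∃ y : Fin k → ℕ, (∀ b, y b < (l ++ m).length) ∧
        ∀ b, evL (l ++ m) (y b) = ∑ a : Fin g0, evL l (x a) * (p a b).toPoly := by
  induction k with
  | zero =>
      intro g0 x hx p
      exact ⟨[], by simpa using hOK, by simp, Fin.elim0, fun b => b.elim0, fun b => b.elim0⟩
  | succ k ih =>
      intro g0 x hx p
      obtain ⟨m1, hOK1, hlen1, y1, hy1, hev1⟩ := ih g0 x hx (fun a b => p a b.castSucc)
      have hz1 : (l ++ m1)[0]? = some (.const 0) := by
        rw [List.getElem?_append_left (len_pos_of_z l hz)]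
        exact hz
      obtain ⟨m2, out, hOK2, hlen2, hout, hev2⟩ :=
        dotProd (l ++ m1) hOK1 hz1 g0 x
          (fun a => lt_of_lt_of_le (hx a) (by simp)) (fun a => p a (Fin.last k))
      refine ⟨m1 ++ m2, by rwa [← List.append_assoc], ?_,
        Fin.lastCases out y1, ?_, ?_⟩
      · simp only [List.length_append]
        have h30 : (3 * g0 - 1) * (k + 1) = (3 * g0 - 1) * k + (3 * g0 - 1) := rfl
        calc m1.length + m2.length ≤ k * (3 * g0 - 1) + (3 * g0 - 1) := by omega
          _ = (k + 1) * (3 * g0 - 1) := by ring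
      · intro b
        rw [← List.append_assoc]
        induction b using Fin.lastCases with
        | last => simp only [Fin.lastCases_last]; exact hout
        | cast b =>
            simp only [Fin.lastCases_castSucc]
            exact lt_of_lt_of_le (hy1 b) (by simp)
      · intro b
        rw [← List.append_assoc]
        induction b using Fin.lastCases with
        | last =>
            simp only [Fin.lastCases_last]
            rw [hev2]
            refine Finset.sum_congr rfl fun a _ => ?_
            rw [evL_append _ _ _ (hx a)]
        | cast b =>
            simp only [Fin.lastCases_castSucc]
            rw [evL_append _ _ _ (hy1 b), hev1]
end TC
namespace TC

theorem decomp2 (l : List ℕ) (h : 2 ≤ l.length) : ∃ a m b, l = a :: (m ++ [b]) := by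
  cases l with
  | nil => simp at h
  | cons a t =>
      have ht : t ≠ [] := by
        intro hc; rw [hc] at h; simp at h
      exact ⟨a, t.dropLast, t.getLast ht, by rw [List.dropLast_append_getLast ht]⟩

variable {K : Type} [Field K]

theorem dim_ge2 : ∀ (F : SForm K), F.WF → F.InputsDimGE2 → 2 ≤ F.eval.order.length := by
  intro F
  induction F with
  | input T => intro _ h2; exact h2
  | contr G H ihG ihH =>
      intro hWF h2
      obtain ⟨hWG, hWH, hcomp⟩ := hWF
      obtain ⟨ga, gm, gc, hGo⟩ := decomp2 _ (ihG hWG h2.1)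
      obtain ⟨hc, hm, hb, hHo⟩ := decomp2 _ (ihH hWH h2.2)
      obtain rfl : gc = hc := by
        have h1 := hcomp.2.2
        rw [hGo, hHo, lastq] at h1
        simpa using h1
      obtain ⟨hO, -⟩ := contr_spec' G.eval H.eval (ga :: gm) (hm ++ [hb]) gc hGo hHo
      show 2 ≤ (G.eval.contr H.eval).order.length
      rw [hO]
      simp
      omega

theorem head_le : ∀ (F : SForm K), F.WF → F.InputsDimGE2 →
    ∀ (g0 : ℕ) (rest : List ℕ), F.eval.order = g0 :: rest → g0 ≤ F.inputMaxOrder := by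
  intro F
  induction F with
  | input T =>
      intro _ _ g0 rest ho
      exact le_foldr_max T.order g0 (ho ▸ List.mem_cons_self (a := g0) (l := rest))
  | contr G H ihG ihH =>
      intro hWF h2 g0 rest ho
      obtain ⟨hWG, hWH, hcomp⟩ := hWF
      obtain ⟨ga, gm, gc, hGo⟩ := decomp2 _ (dim_ge2 G hWG h2.1)
      obtain ⟨hc, hm, hb, hHo⟩ := decomp2 _ (dim_ge2 H hWH h2.2)
      obtain rfl : gc = hc := by
        have h1 := hcomp.2.2
        rw [hGo, hHo, lastq] at h1
        simpa using h1
      obtain ⟨hO, -⟩ := contr_spec' G.eval H.eval (ga :: gm) (hm ++ [hb]) gc hGo hHo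
      have ho2 : (G.eval.contr H.eval).order = ga :: (gm ++ (hm ++ [hb])) := by
        rw [hO]; rfl
      have : g0 = ga := by
        have := ho.symm.trans ho2
        exact (List.cons.injEq _ _ _ _ ▸ this).1
      subst this
      exact le_trans (ihG hWG h2.1 g0 (gm ++ [gc]) hGo) (le_max_left _ _)

end TC
namespace TC
variable {K : Type} [Field K]

def KeyP (n : ℕ) (F : SForm K) (bound : ℕ) : Prop :=
  ∀ (g0 lst : ℕ) (mid : List ℕ) (ho : F.eval.order = g0 :: (mid ++ [lst])) (em : Idx mid)
    (l : List (Gate K)), GOK l → l[0]? = some (.const 0) →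
    ∀ (x : Fin g0 → ℕ), (∀ a, x a < l.length) →
  ∃ m, GOK (l ++ m) ∧ m.length ≤ bound ∧
    ∃ y : Fin lst → ℕ, (∀ b, y b < (l ++ m).length) ∧
      ∀ b, evL (l ++ m) (y b) = ∑ a : Fin g0, evL l (x a) *
        F.eval.entry (Idx.cast ho.symm
          ((a, Idx.app mid em ((b, PUnit.unit) : Idx [lst])) : Idx (g0 :: (mid ++ [lst]))))

theorem Idx.app_split_heq (xs : List ℕ) {ys zs : List ℕ} (em : Idx (xs ++ ys)) (w : Idx zs) :
    HEq (Idx.app (xs ++ ys) em w)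
      (Idx.app xs (ys := ys ++ zs) (Idx.split xs em).1
        (Idx.app ys (ys := zs) (Idx.split xs em).2 w)) := by
  have h := Idx.app_split xs (ys := ys) em
  revert h
  generalize Idx.split xs em = p
  intro h
  subst h
  exact Idx.app_app_heq xs p.1 p.2 w

theorem key_input (n : ℕ) (T : Tens (Entry K))
    (hn : (SForm.input T : SForm K).inputMaxOrder ≤ n) :
    KeyP n (SForm.input T) (2 * n ^ 3 * (SForm.input T : SForm K).size) := by
  intro g0 lst mid ho em l hOK hz x hx
  obtain ⟨m, hOKm, hlen, y, hy, hev⟩ :=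
    dotProdMany l hOK hz lst g0 x hx
      (fun a b => T.entry (Idx.cast ho.symm
        ((a, Idx.app mid em ((b, PUnit.unit) : Idx [lst])) : Idx (g0 :: (mid ++ [lst])))))
  refine ⟨m, hOKm, ?_, y, hy, fun b => hev b⟩
  clear hev
  have hg0n : g0 ≤ n := by
    refine le_trans (le_foldr_max T.order g0 ?_) hn
    rw [show (SForm.input T : SForm K).eval.order = T.order from rfl] at ho
    exact ho ▸ List.mem_cons_self
  have hmidp : 0 < mid.prod := idx_prod_pos mid em
  have hsz : (SForm.input T : SForm K).size = g0 * (mid.prod * lst) := by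
    show T.tsize = _
    rw [Tens.tsize, show T.order = g0 :: (mid ++ [lst]) from ho]
    rw [List.prod_cons, List.prod_append, List.prod_cons, List.prod_nil, mul_one]
  rw [hsz]
  refine le_trans hlen ?_
  have hkey : 3 * g0 - 1 ≤ 2 * n ^ 3 * g0 := by
    rcases Nat.eq_zero_or_pos g0 with rfl | hg0
    · simp
    · have hn1 : 1 ≤ n := le_trans hg0 hg0n
      rcases Nat.lt_or_ge n 2 with h2n | h2n
      · have hne : n = 1 := by omega
        have hge : g0 = 1 := by omega
        subst hne; subst hge
        norm_num
      · have h8 : 3 ≤ 2 * n ^ 3 := by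
          have := Nat.pow_le_pow_left h2n 3
          omega
        calc 3 * g0 - 1 ≤ 3 * g0 := Nat.sub_le _ _
          _ ≤ 2 * n ^ 3 * g0 := Nat.mul_le_mul_right _ h8
  calc lst * (3 * g0 - 1) ≤ lst * (2 * n ^ 3 * g0) := Nat.mul_le_mul_left _ hkey
    _ = 2 * n ^ 3 * (g0 * (1 * lst)) := by ring
    _ ≤ 2 * n ^ 3 * (g0 * (mid.prod * lst)) := by
        refine Nat.mul_le_mul_left _ (Nat.mul_le_mul_left _ (Nat.mul_le_mul_right _ hmidp))

theorem contr_core (n : ℕ) (G H : SForm K) (hWF : (SForm.contr G H).WF)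
    (h2 : (SForm.contr G H).InputsDimGE2)
    (kG : KeyP n G (2 * n ^ 3 * G.size)) (kH : KeyP n H (2 * n ^ 3 * H.size)) :
    KeyP n (SForm.contr G H) (2 * n ^ 3 * G.size + 2 * n ^ 3 * H.size) := by
  obtain ⟨hWG, hWH, hcomp⟩ := hWF
  obtain ⟨h2G, h2H⟩ := h2
  intro g0 lst mid ho em l hOK hz x hx
  obtain ⟨ga, gm, gc, hGo⟩ := decomp2 _ (dim_ge2 G hWG h2G)
  obtain ⟨hc, hm, hb, hHo⟩ := decomp2 _ (dim_ge2 H hWH h2H)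
  obtain rfl : gc = hc := by
    have h1 := hcomp.2.2
    rw [hGo, hHo, lastq] at h1
    simpa using h1
  obtain ⟨hO, hEnt⟩ := contr_spec' G.eval H.eval (ga :: gm) (hm ++ [hb]) gc hGo hHo
  have ho2 : (G.eval.contr H.eval).order = ga :: (gm ++ (hm ++ [hb])) := by rw [hO]; rfl
  have hlists : g0 :: (mid ++ [lst]) = ga :: (gm ++ (hm ++ [hb])) := ho.symm.trans ho2
  injection hlists with e1 e2
  subst e1
  rw [← List.append_assoc] at e2
  obtain ⟨e3, e4⟩ := List.append_inj' e2 rfl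
  injection e4 with e5
  subst e5
  subst e3
  set emG := (Idx.split gm em).1 with hemG
  set emH := (Idx.split gm em).2 with hemH
  obtain ⟨mG, hOKG, hlenG, yG, hyG, hevG⟩ := kG g0 gc gm hGo emG l hOK hz x hx
  have hz2 : (l ++ mG)[0]? = some (.const 0) := by
    rw [List.getElem?_append_left (len_pos_of_z l hz)]
    exact hz
  obtain ⟨mH, hOKH, hlenH, yH, hyH, hevH⟩ := kH gc lst hm hHo emH (l ++ mG) hOKG hz2 yG hyG
  refine ⟨mG ++ mH, by rwa [← List.append_assoc], ?_, yH, ?_, ?_⟩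
  · rw [List.length_append]
    omega
  · intro b
    rw [← List.append_assoc]
    exact hyH b
  · intro b
    rw [← List.append_assoc, hevH b]
    have hstep : ∀ i : Fin gc, evL (l ++ mG) (yG i) = ∑ a : Fin g0, evL l (x a) *
        G.eval.entry (Idx.cast hGo.symm
          ((a, Idx.app gm emG ((i, PUnit.unit) : Idx [gc])) : Idx (g0 :: (gm ++ [gc])))) :=
      fun i => hevG i
    calc (∑ i : Fin gc, evL (l ++ mG) (yG i) *
            H.eval.entry (Idx.cast hHo.symm
              ((i, Idx.app hm emH ((b, PUnit.unit) : Idx [lst])) : Idx (gc :: (hm ++ [lst])))))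
        = ∑ a : Fin g0, evL l (x a) * ∑ i : Fin gc,
            G.eval.entry (Idx.cast hGo.symm
              ((a, Idx.app gm emG ((i, PUnit.unit) : Idx [gc])) : Idx (g0 :: (gm ++ [gc])))) *
            H.eval.entry (Idx.cast hHo.symm
              ((i, Idx.app hm emH ((b, PUnit.unit) : Idx [lst])) : Idx (gc :: (hm ++ [lst])))) := by
          simp only [hstep, Finset.sum_mul, Finset.mul_sum]
          rw [Finset.sum_comm]
          refine Finset.sum_congr rfl fun a _ => Finset.sum_congr rfl fun i _ => by ring
      _ = ∑ a : Fin g0, evL l (x a) *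
            (SForm.contr G H).eval.entry (Idx.cast ho.symm
              ((a, Idx.app (gm ++ hm) em ((b, PUnit.unit) : Idx [lst])) :
                Idx (g0 :: ((gm ++ hm) ++ [lst])))) := by
          refine Finset.sum_congr rfl fun a _ => ?_
          congr 1
          have hh : HEq (Idx.app (gm ++ hm) (ys := [lst]) em (b, PUnit.unit))
              (Idx.app gm (ys := hm ++ [lst]) emG (Idx.app hm (ys := [lst]) emH (b, PUnit.unit))) :=
            Idx.app_split_heq gm (zs := [lst]) em (b, PUnit.unit)
          have hh2 : HEq
              ((a, Idx.app (gm ++ hm) em ((b, PUnit.unit) : Idx [lst])) :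
                Idx (g0 :: ((gm ++ hm) ++ [lst])))
              ((a, Idx.app gm (ys := hm ++ [lst]) emG (Idx.app hm (ys := [lst]) emH (b, PUnit.unit))) :
                Idx (g0 :: (gm ++ (hm ++ [lst])))) :=
            Idx.heq_pair (List.append_assoc gm hm [lst]) a hh
          have hidx : Idx.cast ho.symm
              ((a, Idx.app (gm ++ hm) em ((b, PUnit.unit) : Idx [lst])) :
                Idx (g0 :: ((gm ++ hm) ++ [lst]))) =
              Idx.cast hO.symm (Idx.app (g0 :: gm) (ys := hm ++ [lst]) ((a, emG) : Idx (g0 :: gm))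
                (Idx.app hm (ys := [lst]) emH (b, PUnit.unit))) :=
            Idx.cast_eq_cast_of _ _ _ _ hh2
          have h := (hEnt ((a, emG) : Idx (g0 :: gm))
            (Idx.app hm (ys := [lst]) emH (b, PUnit.unit))).symm
          rw [← hidx] at h
          exact h

theorem key (n : ℕ) : ∀ (F : SForm K), F.WF → F.InputsDimGE2 → F.inputMaxOrder ≤ n →
    KeyP n F (2 * n ^ 3 * F.size) := by
  intro F
  induction F with
  | input T => intro _ _ hn; exact key_input n T hn
  | contr G H ihG ihH =>
      intro hWF h2 hn
      have hcore := contr_core n G H hWF h2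
        (ihG hWF.1 h2.1 (le_trans (le_max_left _ _) hn))
        (ihH hWF.2.1 h2.2 (le_trans (le_max_right _ _) hn))
      intro g0 lst mid ho em l hOK hz x hx
      obtain ⟨m, hOKm, hlen, rest⟩ := hcore g0 lst mid ho em l hOK hz x hx
      refine ⟨m, hOKm, le_trans hlen ?_, rest⟩
      have hsz : (SForm.contr G H).size = G.size + H.size + 1 := rfl
      rw [hsz]
      calc 2 * n ^ 3 * G.size + 2 * n ^ 3 * H.size = 2 * n ^ 3 * (G.size + H.size) := by ring
        _ ≤ 2 * n ^ 3 * (G.size + H.size + 1) := Nat.mul_le_mul_left _ (by omega)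

end TC
namespace TC
variable {K : Type} [Field K]

theorem GOK_single (t : Entry K) : GOK [entryGate t] := by
  intro i g' hg'
  cases i with
  | zero =>
      simp only [List.getElem?_cons_zero, Option.some.injEq] at hg'
      subst hg'
      refine ⟨fun j hj => ?_, fun j k hjk => absurd hjk (entryGate_ne_mul _ _ _)⟩
      rw [entryGate_children] at hj
      exact absurd hj List.not_mem_nil
  | succ i => simp at hg'

theorem GOK_seed : GOK ([Gate.const 0, Gate.const 1] : List (Gate K)) := by
  intro i g' hg'
  match i, hg' with
  | 0, hg' =>
      simp only [List.getElem?_cons_zero, Option.some.injEq] at hg'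
      subst hg'
      exact ⟨fun j hj => absurd hj List.not_mem_nil, fun j k hjk => by simp at hjk⟩
  | 1, hg' =>
      simp only [List.getElem?_cons_succ, List.getElem?_cons_zero, Option.some.injEq] at hg'
      subst hg'
      exact ⟨fun j hj => absurd hj List.not_mem_nil, fun j k hjk => by simp at hjk⟩
  | (n+2), hg' => simp at hg'

end TC

open TC

theorem star_formula_no_vectors_skew' {K : Type} [Field K] (F : SForm K)
    (hWF : F.WF) (h2 : F.InputsDimGE2) :
    ∀ e : Idx F.eval.order, ∃ C : Circuit K,
      C.Skew ∧ C.size ≤ 2 * F.inputMaxOrder ^ 3 * F.size ∧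
      C.Computes (F.eval.entry e) := by
  intro e
  cases F with
  | input T =>
      have hOK1 := GOK_single (T.entry e)
      refine ⟨toCirc [entryGate (T.entry e)] hOK1 0 Nat.zero_lt_one,
        toCirc_skew _ _ _ _, ?_, ?_⟩
      · show ([entryGate (T.entry e)] : List (Gate K)).length ≤
          2 * T.maxOrder ^ 3 * T.tsize
        have hne : T.order ≠ [] := by
          intro hc
          have : 2 ≤ T.order.length := h2
          rw [hc] at this
          simp at this
        obtain ⟨o, rest, hor⟩ := List.exists_cons_of_ne_nil hne
        have ho1 : 1 ≤ o := idx_mem_pos T.order e o (hor ▸ List.mem_cons_self (a := o) (l := rest))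
        have hM : 1 ≤ T.maxOrder := le_trans ho1 (le_foldr_max _ _ (hor ▸ List.mem_cons_self (a := o) (l := rest)))
        have hts : 1 ≤ T.tsize := idx_prod_pos _ e
        have : 0 < 2 * T.maxOrder ^ 3 * T.tsize :=
          Nat.mul_pos (Nat.mul_pos (by omega) (Nat.pow_pos hM)) hts
        exact this
      · show (toCirc _ hOK1 0 _).eval ⟨0, Nat.zero_lt_one⟩ = _
        rw [toCirc_eval _ hOK1 0 Nat.zero_lt_one 0 Nat.zero_lt_one]
        exact evL_entryGate _ 0 _ rfl
  | contr G H =>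
      have hd2 := dim_ge2 (SForm.contr G H) hWF h2
      obtain ⟨g0, mid, lst, ho⟩ := decomp2 _ hd2
      -- components of e
      have hnG : G.inputMaxOrder ≤ (SForm.contr G H).inputMaxOrder := le_max_left _ _
      have hnH : H.inputMaxOrder ≤ (SForm.contr G H).inputMaxOrder := le_max_right _ _
      set n := (SForm.contr G H).inputMaxOrder with hn
      have hcore := contr_core n G H hWF h2
        (key n G hWF.1 h2.1 hnG) (key n H hWF.2.1 h2.2 hnH)
      obtain ⟨m, hOKm, hlen, y, hy, hev⟩ := hcore g0 lst mid ho
        (Idx.split mid (Idx.cast ho e).2).1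
        [Gate.const 0, Gate.const 1] GOK_seed rfl
        (fun a' => if a' = (Idx.cast ho e).1 then 1 else 0)
        (fun a' => by by_cases h : a' = (Idx.cast ho e).1 <;> simp [h])
      refine ⟨toCirc _ hOKm (y (Idx.split mid (Idx.cast ho e).2).2.1)
        (hy _), toCirc_skew _ _ _ _, ?_, ?_⟩
      · show ([Gate.const 0, Gate.const 1] ++ m).length ≤ 2 * n ^ 3 * (SForm.contr G H).size
        have hg0n : g0 ≤ n := head_le (SForm.contr G H) hWF h2 g0 _ ho
        have hg0p : 0 < g0 := (Idx.cast ho e).1.pos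
        have hn3 : 1 ≤ n ^ 3 := Nat.one_le_pow 3 n (by omega)
        have hsz : (SForm.contr G H).size = G.size + H.size + 1 := rfl
        have hring : 2 * n ^ 3 * (G.size + H.size + 1) =
            2 * n ^ 3 * G.size + 2 * n ^ 3 * H.size + 2 * n ^ 3 := by ring
        rw [hsz, hring]
        simp only [List.length_append, List.length_cons, List.length_nil]
        omega
      · show (toCirc _ hOKm _ _).eval ⟨y (Idx.split mid (Idx.cast ho e).2).2.1, hy _⟩ = _
        rw [toCirc_eval _ hOKm _ _ _ (hy _), hev _]
        have hev0 : evL ([Gate.const 0, Gate.const 1] : List (Gate K)) 0 = 0 := evL_zero _ rfl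
        have hev1 : evL ([Gate.const 0, Gate.const 1] : List (Gate K)) 1 = 1 := by
          rw [evL]
          show MvPolynomial.C 1 = 1
          exact map_one _
        have hcollapse : ∀ v : Fin g0 → MvPolynomial ℕ K,
            (∑ a' : Fin g0, evL ([Gate.const 0, Gate.const 1] : List (Gate K))
              (if a' = (Idx.cast ho e).1 then 1 else 0) * v a') = v (Idx.cast ho e).1 := by
          intro v
          have hterm : ∀ a' : Fin g0, evL ([Gate.const 0, Gate.const 1] : List (Gate K))
              (if a' = (Idx.cast ho e).1 then 1 else 0) * v a' =
              if a' = (Idx.cast ho e).1 then v a' else 0 := by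
            intro a'
            split
            · rw [hev1, one_mul]
            · rw [hev0, zero_mul]
          rw [Finset.sum_congr rfl (fun a' _ => hterm a'), Finset.sum_ite_eq']
          simp
        rw [hcollapse]
        congr 1
        -- index identity
        have h2eta : (((Idx.split mid (Idx.cast ho e).2).2.1, PUnit.unit) :
            Idx [lst]) = (Idx.split mid (Idx.cast ho e).2).2 := rfl
        rw [h2eta, Idx.app_split mid (Idx.cast ho e).2]
        rw [show (((Idx.cast ho e).1, (Idx.cast ho e).2) :
          Idx (g0 :: (mid ++ [lst]))) = Idx.cast ho e from rfl]
        rw [Idx.cast_cast, Idx.cast_self]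
open TC

/-- every entry of the tensor computed by a `{*}`-formula all of
whose input tensors have dimension at least 2 is computed by a skew circuit of
size at most `2 * n^3 * |F|`. -/
theorem star_formula_no_vectors_skew {K : Type} [Field K] (F : SForm K)
    (hWF : F.WF) (h2 : F.InputsDimGE2) :
    ∀ e : Idx F.eval.order, ∃ C : Circuit K,
      C.Skew ∧ C.size ≤ 2 * F.inputMaxOrder ^ 3 * F.size ∧
      C.Computes (F.eval.entry e) := by
  exact star_formula_no_vectors_skew' F hWF h2
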